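/- Turek's allocation family for a task set of n tasks over a set C of candidate slice counts contains at most |C|·n allocations. -/
import Mathlib

/-- Turek's allocation family has at most `|C|·n` members: if each of the `K`
allocations assigns to every task a position among the `c = |C|` candidate
slice counts (value `< c`), and the total of positions strictly increases
from each allocation to the next, then `K ≤ c·n`. -/
theorem turek_family_size_le
    (n c K : ℕ) (hn : 1 ≤ n) (hc : 1 ≤ c)
    (a : ℕ → Fin n → ℕ)
    (hpos : ∀ k, k < K → ∀ i, a k i < c)
    (hmono : ∀ k, k + 1 < K → ∑ i, a k i < ∑ i, a (k + 1) i) :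
    K ≤ c * n := by
  have key : ∀ k, k < K → k ≤ ∑ i, a k i := by
    intro k
    induction k with
    | zero => intro _; exact Nat.zero_le _
    | succ m ih =>
      intro hm
      have hmK : m < K := Nat.lt_of_succ_lt hm
      have := hmono m hm
      omega
  rcases Nat.eq_zero_or_pos K with h | h
  · omega
  · have hK1 : K - 1 < K := by omega
    have h1 := key (K - 1) hK1
    have h2 : ∑ i, a (K - 1) i ≤ (c - 1) * n := by
      calc ∑ i, a (K - 1) i ≤ ∑ _i : Fin n, (c - 1) := by
            apply Finset.sum_le_sum
            intro i _
            have := hpos (K - 1) hK1 i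
            omega
        _ = (c - 1) * n := by simp [Finset.sum_const, mul_comm]
    have : (c - 1) * n + n = c * n := by
      have : c - 1 + 1 = c := by omega
      calc (c - 1) * n + n = (c - 1 + 1) * n := by ring
        _ = c * n := by rw [this]
    omega
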